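/- Let N be any negative translation into IL (i.e., N satisfies soundness: CL + Γ ⊢ A implies IL + N(Γ) ⊢ N(A), and characterisation: CL ⊢ N(A) ↔ A). Then the following are equivalent: (1) N is equivalent in IL to the Gödel–Gentzen translation G (IL ⊢ N(A) ↔ G(A) for all A); (2) for every formula A there is B in the negative fragment with IL ⊢ N(A) ↔ B; (3) IL ⊢ N(A) ↔ A for every A in the negative fragment. -/

import Mathlib

/-- Formulas of pure first-order predicate logic (de Bruijn indices;
terms are just variables, atoms are predicate symbols applied to variables). -/
inductive Formula : Type
  | bot : Formula
  | atom : ℕ → List ℕ → Formula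
  | and : Formula → Formula → Formula
  | or : Formula → Formula → Formula
  | imp : Formula → Formula → Formula
  | all : Formula → Formula
  | ex : Formula → Formula

namespace Formula

def neg (A : Formula) : Formula := A.imp bot
def iff (A B : Formula) : Formula := (A.imp B).and (B.imp A)

/-- Lift (shift by one) the free variables ≥ c. -/
def liftVar (c v : ℕ) : ℕ := if v < c then v else v + 1

def lift : ℕ → Formula → Formula
  | _, bot => bot
  | c, atom p ts => atom p (ts.map (liftVar c))
  | c, and A B => and (lift c A) (lift c B)
  | c, or A B => or (lift c A) (lift c B)
  | c, imp A B => imp (lift c A) (lift c B)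
  | c, all A => all (lift (c+1) A)
  | c, ex A => ex (lift (c+1) A)

/-- Substitute the term (variable) `t` for the bound variable at depth `c`. -/
def substVar (c t v : ℕ) : ℕ := if v < c then v else if v = c then t + c else v - 1

def subst : ℕ → ℕ → Formula → Formula
  | _, _, bot => bot
  | c, t, atom p ts => atom p (ts.map (substVar c t))
  | c, t, and A B => and (subst c t A) (subst c t B)
  | c, t, or A B => or (subst c t A) (subst c t B)
  | c, t, imp A B => imp (subst c t A) (subst c t B)
  | c, t, all A => all (subst (c+1) t A)
  | c, t, ex A => ex (subst (c+1) t A)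

end Formula

/-- The three flavours of logic: minimal, intuitionistic, classical. -/
inductive Flavour : Type
  | min | int | cl
  deriving DecidableEq

/-- Natural deduction. `Prf f Γ A`: A is derivable from hypotheses Γ in
minimal/intuitionistic/classical first-order logic according to `f`. -/
inductive Prf : Flavour → Set Formula → Formula → Prop
  | hyp {f : Flavour} {Γ : Set Formula} {A : Formula} : A ∈ Γ → Prf f Γ A
  | andI {f : Flavour} {Γ : Set Formula} {A B : Formula} : Prf f Γ A → Prf f Γ B → Prf f Γ (A.and B)
  | andE1 {f : Flavour} {Γ : Set Formula} {A B : Formula} : Prf f Γ (A.and B) → Prf f Γ A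
  | andE2 {f : Flavour} {Γ : Set Formula} {A B : Formula} : Prf f Γ (A.and B) → Prf f Γ B
  | orI1 {f : Flavour} {Γ : Set Formula} {A B : Formula} : Prf f Γ A → Prf f Γ (A.or B)
  | orI2 {f : Flavour} {Γ : Set Formula} {A B : Formula} : Prf f Γ B → Prf f Γ (A.or B)
  | orE {f : Flavour} {Γ : Set Formula} {A B C : Formula} : Prf f Γ (A.or B) → Prf f (insert A Γ) C →
      Prf f (insert B Γ) C → Prf f Γ C
  | impI {f : Flavour} {Γ : Set Formula} {A B : Formula} : Prf f (insert A Γ) B → Prf f Γ (A.imp B)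
  | impE {f : Flavour} {Γ : Set Formula} {A B : Formula} : Prf f Γ (A.imp B) → Prf f Γ A → Prf f Γ B
  | allI {f : Flavour} {Γ : Set Formula} {A : Formula} : Prf f (Formula.lift 0 '' Γ) A → Prf f Γ (Formula.all A)
  | allE {f : Flavour} {Γ : Set Formula} {A : Formula} (t : ℕ) : Prf f Γ (Formula.all A) → Prf f Γ (A.subst 0 t)
  | exI {f : Flavour} {Γ : Set Formula} {A : Formula} (t : ℕ) : Prf f Γ (A.subst 0 t) → Prf f Γ (Formula.ex A)
  | exE {f : Flavour} {Γ : Set Formula} {A B : Formula} : Prf f Γ (Formula.ex A) →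
      Prf f (insert A (Formula.lift 0 '' Γ)) (B.lift 0) → Prf f Γ B
  | exfalso {f : Flavour} {Γ : Set Formula} {A : Formula} : f ≠ Flavour.min → Prf f Γ Formula.bot → Prf f Γ A
  | dne {f : Flavour} {Γ : Set Formula} {A : Formula} : f = Flavour.cl → Prf f Γ A.neg.neg → Prf f Γ A

/-- The Gödel–Gentzen negative translation. -/
def G : Formula → Formula
  | .bot => .bot
  | .atom p ts => (Formula.atom p ts).neg.neg
  | .and A B => (G A).and (G B)
  | .or A B => ((G A).neg.and (G B).neg).neg
  | .imp A B => (G A).imp (G B)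
  | .all A => .all (G A)
  | .ex A => (Formula.all (G A).neg).neg

/-- The negative fragment: ⊥, negated atoms, closed under ∧, →, ∀. -/
inductive NF : Formula → Prop
  | bot : NF Formula.bot
  | negAtom (p : ℕ) (ts : List ℕ) : NF (Formula.atom p ts).neg
  | and {A B} : NF A → NF B → NF (A.and B)
  | imp {A B} : NF A → NF B → NF (A.imp B)
  | all {A} : NF A → NF (Formula.all A)

open Formula

lemma substVar_liftVar (c v : ℕ) : Formula.substVar c 0 (Formula.liftVar (c+1) v) = v := by
  unfold Formula.liftVar Formula.substVar
  split
  · split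
    · rfl
    · split <;> omega
  · have : ¬ (v + 1 < c) := by omega
    simp only [this, if_false]
    split <;> omega

lemma subst_lift (A : Formula) : ∀ c, Formula.subst c 0 (Formula.lift (c+1) A) = A := by
  induction A <;> intro c <;>
    simp [Formula.lift, Formula.subst, List.map_map, *]
  · simp [Function.comp_def, substVar_liftVar]

lemma prf_weak {f : Flavour} {Γ : Set Formula} {A : Formula} (h : Prf f Γ A) :
    ∀ {Δ : Set Formula}, Γ ⊆ Δ → Prf f Δ A := by
  induction h with
  | hyp h => exact fun hs => .hyp (hs h)
  | andI _ _ ih1 ih2 => exact fun hs => .andI (ih1 hs) (ih2 hs)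
  | andE1 _ ih => exact fun hs => .andE1 (ih hs)
  | andE2 _ ih => exact fun hs => .andE2 (ih hs)
  | orI1 _ ih => exact fun hs => .orI1 (ih hs)
  | orI2 _ ih => exact fun hs => .orI2 (ih hs)
  | orE _ _ _ ih ih1 ih2 =>
      exact fun hs => .orE (ih hs) (ih1 (Set.insert_subset_insert hs))
        (ih2 (Set.insert_subset_insert hs))
  | impI _ ih => exact fun hs => .impI (ih (Set.insert_subset_insert hs))
  | impE _ _ ih1 ih2 => exact fun hs => .impE (ih1 hs) (ih2 hs)
  | allI _ ih => exact fun hs => .allI (ih (Set.image_mono hs))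
  | allE t _ ih => exact fun hs => .allE t (ih hs)
  | exI t _ ih => exact fun hs => .exI t (ih hs)
  | exE _ _ ih ih1 =>
      exact fun hs => .exE (ih hs)
        (ih1 (Set.insert_subset_insert (Set.image_mono hs)))
  | exfalso hf _ ih => exact fun hs => .exfalso hf (ih hs)
  | dne hf _ ih => exact fun hs => .dne hf (ih hs)

lemma prf_to_cl {f : Flavour} {Γ : Set Formula} {A : Formula} (h : Prf f Γ A) :
    Prf Flavour.cl Γ A := by
  induction h with
  | hyp h => exact .hyp h
  | andI _ _ ih1 ih2 => exact .andI ih1 ih2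
  | andE1 _ ih => exact .andE1 ih
  | andE2 _ ih => exact .andE2 ih
  | orI1 _ ih => exact .orI1 ih
  | orI2 _ ih => exact .orI2 ih
  | orE _ _ _ ih ih1 ih2 => exact .orE ih ih1 ih2
  | impI _ ih => exact .impI ih
  | impE _ _ ih1 ih2 => exact .impE ih1 ih2
  | allI _ ih => exact .allI ih
  | allE t _ ih => exact .allE t ih
  | exI t _ ih => exact .exI t ih
  | exE _ _ ih ih1 => exact .exE ih ih1
  | exfalso _ _ ih => exact .exfalso (by simp) ih
  | dne _ _ ih => exact .dne rfl ih
section Helpers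
variable {f : Flavour} {Γ : Set Formula} {A B C : Formula}

lemma wk1 (h : Prf f Γ B) : Prf f (insert A Γ) B := prf_weak h (Set.subset_insert _ _)

lemma p0 : Prf f (insert A Γ) A := .hyp (Set.mem_insert _ _)

lemma pmem (h : A ∈ Γ) : Prf f Γ A := .hyp h

lemma iffI (h1 : Prf f Γ (A.imp B)) (h2 : Prf f Γ (B.imp A)) : Prf f Γ (A.iff B) := .andI h1 h2

lemma iff_refl : Prf f Γ (A.iff A) := iffI (.impI p0) (.impI p0)

lemma iff_symm (h : Prf f Γ (A.iff B)) : Prf f Γ (B.iff A) := iffI (.andE2 h) (.andE1 h)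

lemma imp_trans (h1 : Prf f Γ (A.imp B)) (h2 : Prf f Γ (B.imp C)) : Prf f Γ (A.imp C) :=
  .impI (.impE (wk1 h2) (.impE (wk1 h1) p0))

lemma iff_trans (h1 : Prf f Γ (A.iff B)) (h2 : Prf f Γ (B.iff C)) : Prf f Γ (A.iff C) :=
  iffI (imp_trans (.andE1 h1) (.andE1 h2)) (imp_trans (.andE2 h2) (.andE2 h1))

lemma iff_mp (h1 : Prf f Γ (A.iff B)) (h2 : Prf f Γ A) : Prf f Γ B := .impE (.andE1 h1) h2

lemma iff_mpr (h1 : Prf f Γ (A.iff B)) (h2 : Prf f Γ B) : Prf f Γ A := .impE (.andE2 h1) h2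

lemma prf_imp_congr (h1 : Prf f Γ (A.iff B)) (h2 : Prf f Γ (C.iff D)) :
    Prf f Γ ((A.imp C).iff (B.imp D)) :=
  iffI (.impI (imp_trans (imp_trans (wk1 (.andE2 h1)) p0) (wk1 (.andE1 h2))))
       (.impI (imp_trans (imp_trans (wk1 (.andE1 h1)) p0) (wk1 (.andE2 h2))))

lemma prf_and_congr (h1 : Prf f Γ (A.iff B)) (h2 : Prf f Γ (C.iff D)) :
    Prf f Γ ((A.and C).iff (B.and D)) :=
  iffI (.impI (.andI (.impE (wk1 (.andE1 h1)) (.andE1 p0))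
                     (.impE (wk1 (.andE1 h2)) (.andE2 p0))))
       (.impI (.andI (.impE (wk1 (.andE2 h1)) (.andE1 p0))
                     (.impE (wk1 (.andE2 h2)) (.andE2 p0))))

lemma prf_neg_congr (h1 : Prf f Γ (A.iff B)) : Prf f Γ (A.neg.iff B.neg) :=
  prf_imp_congr h1 iff_refl

lemma prf_all_congr {A B : Formula} (h : ∀ Γ : Set Formula, Prf f Γ (A.iff B)) (Γ : Set Formula) :
    Prf f Γ ((Formula.all A).iff (Formula.all B)) := by
  have dir : ∀ A B : Formula, (∀ Γ : Set Formula, Prf f Γ (A.imp B)) →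
      Prf f Γ ((Formula.all A).imp (Formula.all B)) := by
    intro A B h
    refine .impI (.allI ?_)
    have hA : Prf f (Formula.lift 0 '' insert (Formula.all A) Γ) A := by
      have := Prf.allE (f := f) (Γ := Formula.lift 0 '' insert (Formula.all A) Γ)
        (A := Formula.lift 1 A) 0 (.hyp ?_)
      · rwa [subst_lift] at this
      · rw [Set.image_insert_eq]; exact Set.mem_insert _ _
    exact .impE (h _) hA
  exact iffI (dir A B fun Γ => .andE1 (h Γ)) (dir B A fun Γ => .andE2 (h Γ))

/-- triple negation, minimal logic -/
lemma tneg_iff : Prf f Γ (A.neg.neg.neg.iff A.neg) :=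
  iffI (.impI (.impI (.impE (wk1 p0) (.impI (.impE p0 (wk1 p0))))))
       (.impI (.impI (.impE p0 (wk1 p0))))

end Helpers

lemma stable {A : Formula} (h : NF A) : ∀ Γ : Set Formula, Prf Flavour.int Γ (A.neg.neg.imp A) := by
  induction h with
  | bot =>
      intro Γ
      exact .impI (.impE p0 (.impI p0))
  | negAtom p ts =>
      intro Γ
      exact .andE1 tneg_iff
  | and _ _ ih1 ih2 =>
      intro Γ
      refine .impI (.andI (.impE (ih1 _) ?_) (.impE (ih2 _) ?_))
      · exact .impI (.impE (wk1 p0) (.impI (.impE (wk1 p0) (.andE1 p0))))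
      · exact .impI (.impE (wk1 p0) (.impI (.impE (wk1 p0) (.andE2 p0))))
  | @imp A B _ _ ih1 ih2 =>
      intro Γ
      refine .impI (.impI (.impE (ih2 _) (.impI ?_)))
      -- context: B.neg, A, ¬¬(A→B)  ⊢ ⊥
      refine .impE (.hyp (show (A.imp B).neg.neg ∈ _ by simp)) (.impI ?_)
      -- context: A→B, ¬B, A, ¬¬(A→B) ⊢ ⊥
      exact .impE (.hyp (show B.neg ∈ _ by simp)) (.impE p0 (.hyp (show A ∈ _ by simp)))
  | @all A _ ih =>
      intro Γ
      refine .impI (.allI ?_)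
      rw [Set.image_insert_eq]
      refine .impE (ih _) (.impI ?_)
      -- ctx: A.neg, ¬¬ all (lift 1 A), lifts ⊢ ⊥
      refine .impE (.hyp (show ((Formula.all A).neg.neg.lift 0) ∈ _ by simp)) (.impI ?_)
      set Δ := insert (A.neg) (insert ((Formula.all A).neg.neg.lift 0) (Formula.lift 0 '' Γ)) with hΔ
      have hA : Prf Flavour.int (insert (Formula.all (Formula.lift 1 A)) Δ) A := by
        have h0 := Prf.allE (f := Flavour.int)
          (Γ := insert (Formula.all (Formula.lift 1 A)) Δ) (A := Formula.lift 1 A) 0 p0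
        rwa [subst_lift] at h0
      exact .impE (wk1 p0) hA
lemma NF_G (A : Formula) : NF (G A) := by
  induction A with
  | bot => exact .bot
  | atom p ts => exact .imp (.negAtom p ts) .bot
  | and _ _ ih1 ih2 => exact .and ih1 ih2
  | or _ _ ih1 ih2 => exact .imp (.and (.imp ih1 .bot) (.imp ih2 .bot)) .bot
  | imp _ _ ih1 ih2 => exact .imp ih1 ih2
  | all _ ih => exact .all ih
  | ex _ ih => exact .imp (.all (.imp ih .bot)) .bot

lemma G_lift (A : Formula) : ∀ c, G (Formula.lift c A) = Formula.lift c (G A) := by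
  induction A <;> intro c <;> simp [G, Formula.lift, Formula.neg, *]

lemma G_subst (A : Formula) : ∀ c t, G (Formula.subst c t A) = Formula.subst c t (G A) := by
  induction A <;> intro c t <;> simp [G, Formula.subst, Formula.neg, *]

lemma G_image_lift (Γ : Set Formula) :
    G '' (Formula.lift 0 '' Γ) = Formula.lift 0 '' (G '' Γ) := by
  rw [← Set.image_comp, ← Set.image_comp]
  exact Set.image_congr' (fun A => G_lift A 0)

theorem G_sound {Γ : Set Formula} {A : Formula} (h : Prf Flavour.cl Γ A) :
    Prf Flavour.int (G '' Γ) (G A) := by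
  induction h with
  | hyp h => exact .hyp (Set.mem_image_of_mem _ h)
  | andI _ _ ih1 ih2 => exact .andI ih1 ih2
  | andE1 _ ih => exact .andE1 ih
  | andE2 _ ih => exact .andE2 ih
  | @orI1 _ A B _ ih =>
      exact .impI (.impE (.andE1 p0) (wk1 ih))
  | @orI2 _ A B _ ih =>
      exact .impI (.impE (.andE2 p0) (wk1 ih))
  | @orE _ A B C _ _ _ ih ih1 ih2 =>
      rw [Set.image_insert_eq] at ih1 ih2
      refine .impE (stable (NF_G C) _) (.impI ?_)
      -- ctx: (G C).neg, G Γ ⊢ ⊥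
      refine .impE (wk1 ih) (.andI (.impI ?_) (.impI ?_))
      · exact .impE (wk1 p0) (prf_weak ih1
          (Set.insert_subset_insert (Set.subset_insert _ _)))
      · exact .impE (wk1 p0) (prf_weak ih2
          (Set.insert_subset_insert (Set.subset_insert _ _)))
  | impI _ ih => rw [Set.image_insert_eq] at ih; exact .impI ih
  | impE _ _ ih1 ih2 => exact .impE ih1 ih2
  | allI _ ih => rw [G_image_lift] at ih; exact .allI ih
  | allE t _ ih => rw [G_subst]; exact .allE t ih
  | @exI Γ' A t _ ih =>
      rw [G_subst] at ih
      refine .impI (.impE ?_ (wk1 ih))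
      have h0 := Prf.allE (f := Flavour.int)
        (Γ := insert (Formula.all (G A).neg) (G '' Γ')) (A := (G A).neg) t p0
      exact h0
  | @exE Γ' A B _ _ ih ih1 =>
      rw [Set.image_insert_eq, G_image_lift, G_lift] at ih1
      refine .impE (stable (NF_G B) _) (.impI ?_)
      -- ctx: (G B).neg, G Γ ⊢ ⊥
      refine .impE (wk1 ih) (.allI ?_)
      rw [Set.image_insert_eq]
      -- ctx: lift 0 ((G B).neg), lift '' (G '' Γ) ⊢ (G A).neg
      have hB : Prf Flavour.int (insert (G A) (insert ((Formula.lift 0 (G B)).neg)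
          (Formula.lift 0 '' (G '' Γ')))) (Formula.lift 0 (G B)) :=
        prf_weak ih1 (Set.insert_subset_insert (Set.subset_insert _ _))
      refine .impI (Prf.impE ?_ hB)
      exact .hyp (show (Formula.lift 0 (G B)).neg ∈ _ by
        simp [Formula.neg, Formula.lift])
  | exfalso _ _ ih => exact .exfalso (by simp) ih
  | dne _ _ ih =>
      exact .impE (stable (NF_G _) _) ih
lemma dneg_iff_cl {A : Formula} {Γ : Set Formula} : Prf Flavour.cl Γ (A.neg.neg.iff A) :=
  iffI (.impI (.dne rfl p0)) (.impI (.impI (.impE p0 (wk1 p0))))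

lemma or_classical {A B : Formula} {Γ : Set Formula} :
    Prf Flavour.cl Γ ((((A.neg).and (B.neg)).neg).iff (A.or B)) := by
  refine iffI (.impI (.dne rfl (.impI (.impE (wk1 p0) (.andI ?_ ?_))))) (.impI (.impI ?_))
  · exact .impI (.impE (wk1 p0) (.orI1 p0))
  · exact .impI (.impE (wk1 p0) (.orI2 p0))
  · exact .orE (wk1 p0) (.impE (.andE1 (wk1 p0)) p0) (.impE (.andE2 (wk1 p0)) p0)

lemma ex_classical {A : Formula} {Γ : Set Formula} :
    Prf Flavour.cl Γ (((Formula.all A.neg).neg).iff (Formula.ex A)) := by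
  refine iffI (.impI (.dne rfl (.impI (.impE (wk1 p0) (.allI ?_))))) (.impI (.impI ?_))
  · rw [Set.image_insert_eq]
    refine .impI (Prf.impE (.hyp (show (Formula.ex (Formula.lift 1 A)).neg ∈ _ by
      simp [Formula.neg, Formula.lift])) (.exI 0 ?_))
    rw [subst_lift]
    exact p0
  · -- ctx: all A.neg, ex A, Γ ⊢ ⊥
    refine .exE (wk1 p0) ?_
    rw [Set.image_insert_eq]
    have hall : Prf Flavour.cl (insert A (insert (Formula.lift 0 (Formula.all A.neg))
        (Formula.lift 0 '' insert (Formula.ex A) Γ))) (Formula.subst 0 0 ((Formula.lift 1 A).neg)) :=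
      .allE 0 (wk1 (.hyp (show Formula.all (Formula.lift 1 A.neg) ∈ _ from Set.mem_insert _ _)))
    have e : Formula.subst 0 0 ((Formula.lift 1 A).neg) = A.neg := by
      show ((Formula.lift 1 A).subst 0 0).imp (Formula.bot.subst 0 0) = _
      rw [subst_lift]; rfl
    rw [e] at hall
    exact .impE hall p0

lemma G_iff_cl (A : Formula) : ∀ Γ : Set Formula, Prf Flavour.cl Γ ((G A).iff A) := by
  induction A with
  | bot => exact fun Γ => iff_refl
  | atom p ts => exact fun Γ => dneg_iff_cl
  | and _ _ ih1 ih2 => exact fun Γ => prf_and_congr (ih1 Γ) (ih2 Γ)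
  | or _ _ ih1 ih2 =>
      exact fun Γ => iff_trans (prf_neg_congr (prf_and_congr (prf_neg_congr (ih1 Γ))
        (prf_neg_congr (ih2 Γ)))) or_classical
  | imp _ _ ih1 ih2 => exact fun Γ => prf_imp_congr (ih1 Γ) (ih2 Γ)
  | all _ ih => exact fun Γ => prf_all_congr ih Γ
  | ex _ ih =>
      exact fun Γ => iff_trans (prf_neg_congr
        (prf_all_congr (fun Γ => prf_neg_congr (ih Γ)) Γ)) ex_classical

lemma G_iff_NF {A : Formula} (h : NF A) : ∀ Γ : Set Formula, Prf Flavour.int Γ ((G A).iff A) := by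
  induction h with
  | bot => exact fun Γ => iff_refl
  | negAtom p ts => exact fun Γ => tneg_iff
  | and _ _ ih1 ih2 => exact fun Γ => prf_and_congr (ih1 Γ) (ih2 Γ)
  | imp _ _ ih1 ih2 => exact fun Γ => prf_imp_congr (ih1 Γ) (ih2 Γ)
  | all _ ih => exact fun Γ => prf_all_congr ih Γ

lemma conservative {A : Formula} (hA : NF A) (h : Prf Flavour.cl ∅ A) :
    Prf Flavour.int ∅ A := by
  have hG := G_sound h
  rw [Set.image_empty] at hG
  exact iff_mp (G_iff_NF hA ∅) hG
/-- For a negative translation N into IL, the following are equivalent: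
(1) N is IL-equivalent to G; (2) N translates into the negative fragment in IL;
(3) N acts as the identity on the negative fragment in IL. -/
theorem negative_translation_characterisation (N : Formula → Formula)
    (sound : ∀ (Γ : Set Formula) (A : Formula),
      Prf Flavour.cl Γ A → Prf Flavour.int (N '' Γ) (N A))
    (char : ∀ A : Formula, Prf Flavour.cl ∅ ((N A).iff A)) :
    ((∀ A : Formula, Prf Flavour.int ∅ ((N A).iff (G A))) ↔
      (∀ A : Formula, ∃ B : Formula, NF B ∧ Prf Flavour.int ∅ ((N A).iff B))) ∧
    ((∀ A : Formula, ∃ B : Formula, NF B ∧ Prf Flavour.int ∅ ((N A).iff B)) ↔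
      (∀ A : Formula, NF A → Prf Flavour.int ∅ ((N A).iff A))) := by
  have h23 : (∀ A : Formula, ∃ B : Formula, NF B ∧ Prf Flavour.int ∅ ((N A).iff B)) →
      (∀ A : Formula, NF A → Prf Flavour.int ∅ ((N A).iff A)) := by
    intro h2 A hA
    obtain ⟨B, hB, hNB⟩ := h2 A
    have clBA : Prf Flavour.cl ∅ (B.iff A) :=
      iff_trans (iff_symm (prf_to_cl hNB)) (char A)
    have ilBA : Prf Flavour.int ∅ (B.iff A) :=
      conservative (NF.and (NF.imp hB hA) (NF.imp hA hB)) clBA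
    exact iff_trans hNB ilBA
  have h31 : (∀ A : Formula, NF A → Prf Flavour.int ∅ ((N A).iff A)) →
      (∀ A : Formula, Prf Flavour.int ∅ ((N A).iff (G A))) := by
    intro h3 A
    have hGA : Prf Flavour.cl (∅ : Set Formula) ((G A).iff A) := G_iff_cl A ∅
    have p1 : Prf Flavour.cl (insert A (∅ : Set Formula)) (G A) := iff_mpr (wk1 hGA) p0
    have p2 : Prf Flavour.cl (insert (G A) (∅ : Set Formula)) A := iff_mp (wk1 hGA) p0
    have s1 := sound _ _ p1
    have s2 := sound _ _ p2
    rw [Set.image_insert_eq, Set.image_empty] at s1 s2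
    have hNN : Prf Flavour.int ∅ ((N A).iff (N (G A))) := iffI (.impI s1) (.impI s2)
    exact iff_trans hNN (h3 (G A) (NF_G A))
  refine ⟨⟨fun h1 A => ⟨G A, NF_G A, h1 A⟩, fun h2 => h31 (h23 h2)⟩,
    ⟨h23, fun h3 A => ⟨G A, NF_G A, h31 h3 A⟩⟩⟩
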